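/- Let g_1, g_2 be binary morphisms on X = {a,b} with g_1(a) = a^s, g_1(b) = a^{γ_1} b a^{α_1} ⋯ b a^{α_{p-1}} b a^{γ_2}, g_2(a) = a^t, g_2(b) = a^{δ_1} b a^{β_1} ⋯ b a^{β_{q-1}} b a^{δ_2}, where s,t ≥ 1, p = q ≥ 2 and all exponents are nonnegative. If g_1 g_2 = g_2 g_1, then at least one of the following holds: (i) g_1 = g_2; (ii) g_1(b) and g_2(b) are both powers of b; (iii) g_1(a) = g_2(a) = a and the words g_1(b) and g_2(b) are a-conjugates. -/

import Mathlib

/-- Words over the binary alphabet: `false` is the letter `a`, `true` is the letter `b`. -/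
abbrev Word := List Bool

/-- The morphism of the free monoid determined by the images `g` of the letters. -/
def applyG (g : Bool → Word) (w : Word) : Word := w.flatMap g

/-- `a^n`. -/
def rep (n : ℕ) : Word := List.replicate n false

/-- `b a^{α 1} b a^{α 2} ⋯ b a^{α (p-1)} b`, a word with `p` occurrences of `b`. -/
def blockWord (p : ℕ) (α : ℕ → ℕ) : Word :=
  ((List.range (p - 1)).flatMap fun i => true :: rep (α (i + 1))) ++ [true]

/-- `w^k`. -/
def wordPow (w : Word) (k : ℕ) : Word := (List.replicate k w).flatten

/-- `u` and `v` are `a`-conjugates. -/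
def AConj (u v : Word) : Prop :=
  ∃ p q r s : ℕ, ∃ w : Word,
    u = rep p ++ w ++ rep q ∧ v = rep r ++ w ++ rep s ∧ p + q = r + s

/-- `w` is the infinite word `ω(g)`: for every `n`, the word obtained from `g^n(b)` by deleting
all occurrences of `a` preceding the first occurrence of `b` is a prefix of `w`. -/
def IsOmega (g : Bool → Word) (w : ℕ → Bool) : Prop :=
  ∀ n k : ℕ, ∀ hk : k < (((applyG g)^[n] [true]).dropWhile (fun x => !x)).length,
    (((applyG g)^[n] [true]).dropWhile (fun x => !x)).get ⟨k, hk⟩ = w k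

/-- `Aw w i` (for `i ≥ 1`): the number of occurrences of `a` in `w` strictly between the
`i`-th and `(i+1)`-th occurrences of `b` in `w`. -/
noncomputable def Aw (w : ℕ → Bool) (i : ℕ) : ℕ :=
  Nat.nth (fun n => w n = true) i - Nat.nth (fun n => w n = true) (i - 1) - 1

def wd (n : ℕ) (f : ℕ → ℕ) : Word :=
  rep (f 0) ++ (List.range n).flatMap (fun i => true :: rep (f (i+1)))

lemma wd_zero (f : ℕ → ℕ) : wd 0 f = rep (f 0) := by simp [wd]

lemma wd_succ (n : ℕ) (f : ℕ → ℕ) :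
    wd (n+1) f = rep (f 0) ++ true :: wd n (fun i => f (i+1)) := by
  simp only [wd, List.range_succ_eq_map, List.flatMap_cons, List.flatMap_map]
  simp

lemma wd_congr {n : ℕ} {f g : ℕ → ℕ} (h : ∀ i ≤ n, f i = g i) : wd n f = wd n g := by
  unfold wd
  rw [h 0 (Nat.zero_le _)]
  congr 1
  exact List.flatMap_congr (fun i hi => by
    rw [h (i+1) (by have := List.mem_range.mp hi; omega)])

lemma cons_true_inj {a b : ℕ} {u v : Word} (h : rep a ++ true :: u = rep b ++ true :: v) :
    a = b ∧ u = v := by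
  induction a generalizing b with
  | zero =>
    cases b with
    | zero => simpa [rep] using h
    | succ b => simp [rep, List.replicate_succ] at h
  | succ a ih =>
    cases b with
    | zero => simp [rep, List.replicate_succ] at h
    | succ b =>
      simp only [rep, List.replicate_succ, List.cons_append, List.cons.injEq, true_and] at h
      obtain ⟨h1, h2⟩ := ih h
      exact ⟨by omega, h2⟩

lemma rep_inj {a b : ℕ} (h : rep a = rep b) : a = b := by
  have := congrArg List.length h; simpa [rep] using this

lemma wd_inj {n : ℕ} {f g : ℕ → ℕ} (h : wd n f = wd n g) : ∀ i ≤ n, f i = g i := by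
  induction n generalizing f g with
  | zero =>
    intro i hi
    interval_cases i
    rw [wd_zero, wd_zero] at h
    exact rep_inj h
  | succ n ih =>
    rw [wd_succ, wd_succ] at h
    obtain ⟨h0, h1⟩ := cons_true_inj h
    intro i hi
    cases i with
    | zero => exact h0
    | succ i => exact ih h1 i (by omega)

lemma rep_append_rep (a b : ℕ) : rep a ++ rep b = rep (a + b) := by
  simp [rep, ← List.replicate_add]

lemma rep_prepend_wd (m n : ℕ) (f : ℕ → ℕ) :
    rep m ++ wd n f = wd n (fun i => if i = 0 then m + f 0 else f i) := by
  unfold wd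
  rw [← List.append_assoc, rep_append_rep]
  simp

lemma wd_append (m n : ℕ) (f g : ℕ → ℕ) :
    wd m f ++ wd n g =
      wd (m + n) (fun i => if i < m then f i else if i = m then f m + g 0 else g (i - m)) := by
  induction m generalizing f with
  | zero =>
    rw [wd_zero, rep_prepend_wd, Nat.zero_add]
    apply wd_congr
    intro i _
    rcases Nat.eq_zero_or_pos i with rfl | hi
    · simp
    · simp [Nat.pos_iff_ne_zero.mp hi, (by omega : ¬ i < 0)]
  | succ m ih =>
    rw [wd_succ, List.append_assoc, List.cons_append, ih, show m + 1 + n = (m + n) + 1 by omega,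
      wd_succ]
    congr 1
    · simp

def cgap (s p : ℕ) (G : ℕ → ℕ) (n : ℕ) (F : ℕ → ℕ) (j : ℕ) : ℕ :=
  if j = 0 then s * F 0 + G 0
  else if j % p ≠ 0 then G (j % p)
  else if j = n * p then G p + s * F n
  else G p + s * F (j / p) + G 0

lemma applyG_append (g : Bool → Word) (u v : Word) :
    applyG g (u ++ v) = applyG g u ++ applyG g v := by
  simp [applyG]

lemma applyG_rep {g : Bool → Word} {s : ℕ} (hga : g false = rep s) (m : ℕ) :
    applyG g (rep m) = rep (s * m) := by
  induction m with
  | zero => simp [applyG, rep]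
  | succ m ih =>
    rw [show rep (m+1) = [false] ++ rep m by simp [rep, List.replicate_succ],
      applyG_append, ih, show applyG g [false] = rep s by simp [applyG, hga],
      rep_append_rep]
    congr 1; ring

lemma applyG_key {g : Bool → Word} {s p : ℕ} {G : ℕ → ℕ} (hp : 1 ≤ p)
    (hga : g false = rep s) (hgb : g true = wd p G) (n : ℕ) (hn : 1 ≤ n) (F : ℕ → ℕ) :
    applyG g (wd n F) = wd (n * p) (cgap s p G n F) := by
  obtain ⟨n, rfl⟩ : ∃ m, n = m + 1 := ⟨n - 1, by omega⟩
  clear hn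
  induction n generalizing F with
  | zero =>
    rw [wd_succ, wd_zero, applyG_append, applyG_rep hga,
      show applyG g (true :: rep (F 1)) = g true ++ applyG g (rep (F 1)) by simp [applyG],
      applyG_rep hga, hgb,
      show rep (s * F 1) = wd 0 (fun _ => s * F 1) by rw [wd_zero], wd_append,
      rep_prepend_wd, show (0 + 1) * p = p + 0 by ring]
    apply wd_congr
    intro i hip
    rcases Nat.eq_zero_or_pos i with rfl | hi0
    · have c1 : 0 < p := by omega
      simp [cgap, c1]
    by_cases hipp : i = p
    · subst hipp
      have h1 : i % i = 0 := Nat.mod_self i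
      have h2 : i / i = 1 := Nat.div_self (by omega)
      have c1 : ¬ i = 0 := by omega
      have c2 : ¬ 0 = i := by omega
      have c3 : ¬ i < i := by omega
      simp [cgap, c1, c2, c3, h1, h2, show (0+1) * i = i by ring]
    · have hlt : i < p := by omega
      have c1 : ¬ i = 0 := by omega
      have hmm := Nat.mod_eq_of_lt hlt
      simp [cgap, c1, hlt, hmm, hipp]
  | succ n ih =>
    rw [wd_succ, applyG_append, applyG_rep hga,
      show applyG g (true :: wd (n+1) fun i => F (i+1)) =
        g true ++ applyG g (wd (n+1) fun i => F (i+1)) by simp [applyG],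
      ih, hgb, ← List.append_assoc, rep_prepend_wd, wd_append,
      show p + (n + 1) * p = (n + 1 + 1) * p by ring]
    apply wd_congr
    intro i hile
    have hple : p + (n+1) * p = (n + 1 + 1) * p := by ring
    rcases Nat.eq_zero_or_pos i with rfl | hi0
    · have c1 : 0 < p := by omega
      simp [cgap, c1]
    have hi0' : ¬ i = 0 := by omega
    by_cases h1 : i < p
    · have hmm : i % p = i := Nat.mod_eq_of_lt h1
      simp [cgap, hi0', h1, hmm]
    push_neg at h1
    by_cases h2 : i = p
    · rw [h2]
      have hlt : p < (n + 1 + 1) * p := by nlinarith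
      have hd : p / p = 1 := Nat.div_self (by omega)
      have c1 : ¬ p = 0 := by omega
      have c2 : ¬ p < p := by omega
      have c3 : p ≠ (n + 1 + 1) * p := Nat.ne_of_lt hlt
      have c4 : p % p = 0 := Nat.mod_self p
      simp [cgap, c1, c2, c3, c4, hd]
      omega
    -- i > p
    have hij : i = p + (i - p) := by omega
    set j := i - p with hjdef
    clear_value j
    have hj1 : 1 ≤ j := by omega
    have hjle : j ≤ (n+1) * p := by omega
    have hmod : i % p = j % p := by rw [hij]; exact Nat.add_mod_left p j
    have hidiv : i / p = j / p + 1 := by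
      rw [hij, Nat.add_comm p j, Nat.add_div_right _ (by omega)]
    rw [if_neg (by omega : ¬ i < p), if_neg h2]
    show cgap s p G (n+1) (fun k => F (k+1)) j = cgap s p G (n+1+1) F i
    unfold cgap
    by_cases hm : j % p = 0
    · by_cases hend : j = (n+1) * p
      · have hiend : i = (n+1+1) * p := by omega
        have c1 : ¬ j = 0 := by omega
        have c2 : ¬ p = 0 := by omega
        simp [c1, c2, hi0', hm, hmod, hend, hiend]
      · have hiend : ¬ i = (n+1+1) * p := by omega
        have c1 : ¬ j = 0 := by omega
        have c2 : ¬ p = 0 := by omega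
        simp [c1, c2, hi0', hm, hmod, hend, hiend, hidiv]
    · have c1 : ¬ j = 0 := by omega
      have c2 : ¬ p = 0 := by omega
      simp [c1, c2, hi0', hm, hmod]

lemma flatMap_const_true (m : ℕ) :
    (List.range m).flatMap (fun _ => [true]) = List.replicate m true := by
  induction m with
  | zero => simp
  | succ m ih =>
    rw [List.range_succ, List.flatMap_append, ih]
    simp [List.replicate_succ']

lemma blockWord_congr {p : ℕ} {α β : ℕ → ℕ} (h : ∀ i, 1 ≤ i → i ≤ p - 1 → α i = β i) :
    blockWord p α = blockWord p β := by
  unfold blockWord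
  congr 1
  exact List.flatMap_congr (fun i hi => by
    have := List.mem_range.mp hi
    rw [h (i+1) (by omega) (by omega)])

lemma blockWord_ones {p : ℕ} (hp : 1 ≤ p) {α : ℕ → ℕ} (h : ∀ i, 1 ≤ i → i ≤ p - 1 → α i = 0) :
    blockWord p α = List.replicate p true := by
  unfold blockWord
  have h2 : (List.range (p-1)).flatMap (fun i => true :: rep (α (i+1)))
      = (List.range (p-1)).flatMap (fun _ => [true]) :=
    List.flatMap_congr (fun i hi => by
      have := List.mem_range.mp hi
      rw [h (i+1) (by omega) (by omega)]
      simp [rep])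
  rw [h2, flatMap_const_true, ← List.replicate_succ']
  congr 1
  omega

lemma block_eq_wd (p γ₁ γ₂ : ℕ) (α : ℕ → ℕ) (hp : 1 ≤ p) :
    rep γ₁ ++ blockWord p α ++ rep γ₂ =
      wd p (fun i => if i = 0 then γ₁ else if i = p then γ₂ else α i) := by
  obtain ⟨m, rfl⟩ : ∃ m, p = m + 1 := ⟨p - 1, by omega⟩
  unfold wd blockWord
  rw [List.range_succ, List.flatMap_append]
  simp only [Nat.add_sub_cancel, List.flatMap_cons, List.flatMap_nil, List.append_nil,
    List.append_assoc, List.cons_append, List.nil_append]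
  congr 1
  have e1 : ((List.range m).flatMap fun i =>
        true :: rep (if i + 1 = 0 then γ₁ else if i + 1 = m + 1 then γ₂ else α (i + 1)))
      = (List.range m).flatMap fun i => true :: rep (α (i + 1)) :=
    List.flatMap_congr (fun i hi => by
      have := List.mem_range.mp hi
      rw [if_neg (by omega), if_neg (by omega)])
  rw [e1]
  simp

lemma cancel_aux {s a b : ℕ} (h2 : 2 ≤ s) (h : s * a + b = s * b + a) : a = b := by
  rcases lt_trichotomy a b with h' | h' | h'
  · nlinarith
  · exact h'
  · nlinarith

/-- if `p = q` and `g₁g₂ = g₂g₁` then `g₁ = g₂`, or both `g₁(b)`, `g₂(b)` are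
powers of `b`, or `g₁(a)=g₂(a)=a` and `g₁(b)`, `g₂(b)` are `a`-conjugates. -/
theorem stmt12 (s t : ℕ) (hs : 1 ≤ s) (ht : 1 ≤ t)
    (p q : ℕ) (hp : 2 ≤ p) (hq : 2 ≤ q)
    (γ₁ γ₂ δ₁ δ₂ : ℕ) (α β : ℕ → ℕ)
    (g₁ g₂ : Bool → Word)
    (h₁a : g₁ false = rep s)
    (h₁b : g₁ true = rep γ₁ ++ blockWord p α ++ rep γ₂)
    (h₂a : g₂ false = rep t)
    (h₂b : g₂ true = rep δ₁ ++ blockWord q β ++ rep δ₂)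
    (hpq : p = q)
    (hcomm : applyG g₁ ∘ applyG g₂ = applyG g₂ ∘ applyG g₁) :
    g₁ = g₂ ∨
      ((∃ k : ℕ, g₁ true = List.replicate k true) ∧
        (∃ k : ℕ, g₂ true = List.replicate k true)) ∨
      (g₁ false = [false] ∧ g₂ false = [false] ∧ AConj (g₁ true) (g₂ true))  := by
  subst hpq
  have hp1 : 1 ≤ p := by omega
  have h₁b' : g₁ true = wd p (fun i => if i = 0 then γ₁ else if i = p then γ₂ else α i) := by
    rw [h₁b, block_eq_wd p γ₁ γ₂ α hp1]
  have h₂b' : g₂ true = wd p (fun i => if i = 0 then δ₁ else if i = p then δ₂ else β i) := by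
    rw [h₂b, block_eq_wd p δ₁ δ₂ β hp1]
  have hc := congrFun hcomm [true]
  simp only [Function.comp_apply] at hc
  rw [show applyG g₂ [true] = g₂ true by simp [applyG],
    show applyG g₁ [true] = g₁ true by simp [applyG], h₁b', h₂b',
    applyG_key hp1 h₁a h₁b' p hp1, applyG_key hp1 h₂a h₂b' p hp1] at hc
  have H := wd_inj hc
  have cp0 : ¬ p = 0 := by omega
  have E0 : s * δ₁ + γ₁ = t * γ₁ + δ₁ := by
    have h0 := H 0 (Nat.zero_le _)
    simpa [cgap] using h0
  have Einf : γ₂ + s * δ₂ = δ₂ + t * γ₂ := by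
    have h0 := H (p * p) (le_refl _)
    have m0 : ¬ p * p = 0 := by simp [cp0]
    have m1 : p * p % p = 0 := Nat.mul_mod_left p p
    simp [cgap, m0, m1, cp0] at h0
    omega
  have Ek : ∀ k, 1 ≤ k → k ≤ p - 1 → α k = β k := by
    intro k hk1 hk2
    have hkp : k < p := by omega
    have hk := H k (by nlinarith)
    have c1 : ¬ k = 0 := by omega
    have c2 : k % p = k := Nat.mod_eq_of_lt hkp
    have c3 : ¬ k = p := by omega
    simpa [cgap, c1, c2, c3] using hk
  have Jk : ∀ k, 1 ≤ k → k ≤ p - 1 → γ₂ + s * β k + γ₁ = δ₂ + t * α k + δ₁ := by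
    intro k hk1 hk2
    have hkp : k < p := by omega
    have hk := H (k * p) (by nlinarith)
    have m0 : ¬ k * p = 0 := by
      have : 0 < k * p := Nat.mul_pos (by omega) (by omega)
      omega
    have m1 : k * p % p = 0 := Nat.mul_mod_left k p
    have m2 : ¬ k * p = p * p := by
      have : k * p < p * p := by nlinarith
      omega
    have m3 : k * p / p = k := Nat.mul_div_cancel k (by omega)
    have c1 : ¬ k = 0 := by omega
    have c3 : ¬ k = p := by omega
    simp [cgap, m0, m1, m2, m3, c1, c3, cp0] at hk
    omega
  by_cases hst : s = t
  · subst hst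
    have hE1 : α 1 = β 1 := Ek 1 le_rfl (by omega)
    have hJ1 : γ₂ + s * β 1 + γ₁ = δ₂ + s * α 1 + δ₁ := Jk 1 le_rfl (by omega)
    rw [← hE1] at hJ1
    have hGD : γ₁ + γ₂ = δ₁ + δ₂ := by
      generalize s * α 1 = X at hJ1
      omega
    by_cases hs1 : s = 1
    · right; right
      subst hs1
      refine ⟨by simp [h₁a, rep], by simp [h₂a, rep], ?_⟩
      exact ⟨γ₁, γ₂, δ₁, δ₂, blockWord p α, h₁b, by
        rw [h₂b, blockWord_congr (fun i h1 h2 => (Ek i h1 h2).symm)], by omega⟩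
    · left
      have hs2 : 2 ≤ s := by omega
      have hγ₁ : δ₁ = γ₁ := cancel_aux hs2 E0
      have hγ₂ : δ₂ = γ₂ := cancel_aux hs2 (by omega)
      funext x
      cases x
      · rw [h₁a, h₂a]
      · rw [h₁b, h₂b, hγ₁, hγ₂, blockWord_congr Ek]
  · right; left
    have zA : (γ₁ : ℤ) + γ₂ + s * α 1 = δ₁ + δ₂ + t * α 1 := by
      have hE1 : α 1 = β 1 := Ek 1 le_rfl (by omega)
      have hJ1 : γ₂ + s * β 1 + γ₁ = δ₂ + t * α 1 + δ₁ := Jk 1 le_rfl (by omega)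
      rw [← hE1] at hJ1
      zify at hJ1
      linarith
    have zB : (s : ℤ) * (δ₁ + δ₂) + (γ₁ + γ₂) = t * (γ₁ + γ₂) + (δ₁ + δ₂) := by
      zify at E0 Einf
      linarith
    have key : ((s : ℤ) - t) * ((γ₁ : ℤ) + γ₂ + ((s : ℤ) - 1) * α 1) = 0 := by
      linear_combination zB + ((s : ℤ) - 1) * zA
    have hst' : (s : ℤ) - t ≠ 0 := by
      intro hcon
      exact hst (by exact_mod_cast sub_eq_zero.mp hcon)
    have hzero : (γ₁ : ℤ) + γ₂ + ((s : ℤ) - 1) * α 1 = 0 :=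
      (mul_eq_zero.mp key).resolve_left hst'
    have hnn : (0 : ℤ) ≤ ((s : ℤ) - 1) * α 1 := by
      apply mul_nonneg
      · have : (1 : ℤ) ≤ s := by exact_mod_cast hs
        linarith
      · exact Int.natCast_nonneg _
    have hΓ : γ₁ = 0 ∧ γ₂ = 0 := by
      have h2 : (0 : ℤ) ≤ (γ₁ : ℤ) := Int.natCast_nonneg _
      have h3 : (0 : ℤ) ≤ (γ₂ : ℤ) := Int.natCast_nonneg _
      have h1 : (γ₁ : ℤ) + γ₂ = 0 := by linarith
      omega
    have hg1z : (γ₁ : ℤ) = 0 := by exact_mod_cast hΓ.1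
    have hg2z : (γ₂ : ℤ) = 0 := by exact_mod_cast hΓ.2
    have hprod : ((s : ℤ) - 1) * α 1 = 0 := by linarith
    have hΔ : δ₁ = 0 ∧ δ₂ = 0 := by
      have hd1 : (0 : ℤ) ≤ (δ₁ : ℤ) := Int.natCast_nonneg _
      have hd2 : (0 : ℤ) ≤ (δ₂ : ℤ) := Int.natCast_nonneg _
      have ha1 : (0 : ℤ) ≤ (α 1 : ℤ) := Int.natCast_nonneg _
      have hsum : (δ₁ : ℤ) + δ₂ = 0 := by
        by_cases hs1 : s = 1
        · have ht2 : 2 ≤ t := by omega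
          have h2 : (2 : ℤ) * (α 1 : ℤ) ≤ (t : ℤ) * (α 1 : ℤ) := by
            apply mul_le_mul_of_nonneg_right _ ha1
            exact_mod_cast ht2
          have hs1' : (s : ℤ) = 1 := by exact_mod_cast hs1
          rw [hs1'] at zA
          linarith
        · have hα1 : (α 1 : ℤ) = 0 := by
            rcases mul_eq_zero.mp hprod with h | h
            · exfalso
              have : (s : ℤ) = 1 := by linarith
              exact hs1 (by exact_mod_cast this)
            · exact h
          rw [hα1] at zA
          linarith
      omega
    obtain ⟨hg1, hg2⟩ := hΓ
    obtain ⟨hd1, hd2⟩ := hΔ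
    have hαk : ∀ k, 1 ≤ k → k ≤ p - 1 → α k = 0 := by
      intro k h1 h2
      have hE := Ek k h1 h2
      have hJ := Jk k h1 h2
      rw [← hE, hg1, hg2, hd1, hd2] at hJ
      have hJ' : s * α k = t * α k := by omega
      by_contra hne
      exact hst (Nat.eq_of_mul_eq_mul_right (Nat.pos_of_ne_zero hne) hJ')
    constructor
    · refine ⟨p, ?_⟩
      rw [h₁b, hg1, hg2, blockWord_ones hp1 hαk]
      simp [rep]
    · refine ⟨p, ?_⟩
      rw [h₂b, hd1, hd2, blockWord_ones hp1 (fun i a b => by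
        rw [← Ek i a b]; exact hαk i a b)]
      simp [rep]
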